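/- Let s ≥ 1, let d₁,...,d_s be positive integers with partial sums m_i = d₁+...+d_i, set d_i = 0 and m_i = m_s for i > s, and define ℓ_i = h_i = 2^{v₂(i)} for all i ≥ 1. Then Σ_{i=1}^{s-1} (m_{i+ℓ_i} - m_i) ≤ m_s · ⌈log₂ s⌉; in particular this sum is O(m_s log s). -/
import Mathlib


/-- With `m i = d₁ + ... + d_i` (and `d_i = 0` for `i > s`, so `m i = m s` there) and
the paving rule `ℓ_i = 2^(v₂ i)`, one has `∑_{i=1}^{s-1} (m (i+ℓ_i) - m i) ≤ m s * ⌈log₂ s⌉`. -/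
theorem stmt9 (s : ℕ) (hs : 1 ≤ s) (d : ℕ → ℕ)
    (hd : ∀ i, 1 ≤ i → i ≤ s → 0 < d i) (hd0 : ∀ i, s < i → d i = 0)
    (m : ℕ → ℕ) (hm : ∀ i, m i = ∑ j ∈ Finset.range i, d (j + 1))
    (ℓ : ℕ → ℕ) (hℓ : ∀ i, ℓ i = 2 ^ (padicValNat 2 i)) :
    ∑ i ∈ Finset.Ico 1 s, (m (i + ℓ i) - m i) ≤ m s * Nat.clog 2 s := by
  have hmono : Monotone m := by
    intro a b hab
    rw [hm a, hm b]
    apply Finset.sum_le_sum_of_subset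
    exact Finset.range_subset_range.mpr hab
  have hcap : ∀ j, m j ≤ m s := by
    intro j
    rcases le_or_gt j s with h | h
    · exact hmono h
    · rw [hm j, hm s, ← Finset.sum_range_add_sum_Ico _ h.le]
      have h0 : ∑ t ∈ Finset.Ico s j, d (t + 1) = 0 := by
        apply Finset.sum_eq_zero
        intro t ht
        exact hd0 _ (by have := (Finset.mem_Ico.mp ht).1; omega)
      omega
  -- classify by valuation
  have hmaps : ∀ i ∈ Finset.Ico 1 s, padicValNat 2 i ∈ Finset.range (Nat.clog 2 s) := by
    intro i hi
    rw [Finset.mem_range]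
    obtain ⟨hi1, hi2⟩ := Finset.mem_Ico.mp hi
    have hdvd : 2 ^ padicValNat 2 i ∣ i := pow_padicValNat_dvd
    have h1 : 2 ^ padicValNat 2 i ≤ i := Nat.le_of_dvd (by omega) hdvd
    have h2 : s ≤ 2 ^ Nat.clog 2 s := Nat.le_pow_clog (by norm_num) s
    have : (2:ℕ) ^ padicValNat 2 i < 2 ^ Nat.clog 2 s := by omega
    exact (Nat.pow_lt_pow_iff_right (by norm_num)).mp this
  rw [← Finset.sum_fiberwise_of_maps_to hmaps]
  have hbound : ∀ κ ∈ Finset.range (Nat.clog 2 s),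
      ∑ i ∈ (Finset.Ico 1 s).filter (fun i => padicValNat 2 i = κ),
        (m (i + ℓ i) - m i) ≤ m s := by
    intro κ _
    set T := (Finset.Ico 1 s).filter (fun i => padicValNat 2 i = κ) with hT
    have hdvdT : ∀ i ∈ T, 2 ^ κ ∣ i := by
      intro i hi
      obtain ⟨_, hv⟩ := Finset.mem_filter.mp hi
      rw [← hv]; exact pow_padicValNat_dvd
    have hlT : ∀ i ∈ T, ℓ i = 2 ^ κ := by
      intro i hi
      obtain ⟨_, hv⟩ := Finset.mem_filter.mp hi
      rw [hℓ, hv]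
    have hterm : ∀ i ∈ T, m (i + ℓ i) - m i
        = (Finset.Ico (m i) (m (i + 2 ^ κ))).card := by
      intro i hi
      rw [hlT i hi, Nat.card_Ico]
    rw [Finset.sum_congr rfl hterm]
    have hdisj : (T : Set ℕ).PairwiseDisjoint
        (fun i => Finset.Ico (m i) (m (i + 2 ^ κ))) := by
      intro i hi j hj hij
      have key : ∀ a b : ℕ, a ∈ T → b ∈ T → a < b →
          Disjoint (Finset.Ico (m a) (m (a + 2 ^ κ))) (Finset.Ico (m b) (m (b + 2 ^ κ))) := by
        intro a b ha hb hab
        have hda := hdvdT a ha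
        have hdb := hdvdT b hb
        have hle : a + 2 ^ κ ≤ b := by
          obtain ⟨qa, hqa⟩ := hda
          obtain ⟨qb, hqb⟩ := hdb
          have : qa < qb := by
            by_contra h
            push_neg at h
            have := Nat.mul_le_mul_left (2 ^ κ) h
            omega
          calc a + 2 ^ κ = 2 ^ κ * (qa + 1) := by rw [hqa]; ring
            _ ≤ 2 ^ κ * qb := Nat.mul_le_mul_left _ (by omega)
            _ = b := hqb.symm
        have : m (a + 2 ^ κ) ≤ m b := hmono hle
        rw [Finset.disjoint_left]
        intro x hx hx'
        simp only [Finset.mem_Ico] at hx hx'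
        omega
      rcases lt_or_gt_of_ne hij with h | h
      · exact key i j hi hj h
      · exact (key j i hj hi h).symm
    calc ∑ i ∈ T, (Finset.Ico (m i) (m (i + 2 ^ κ))).card
        = (T.biUnion (fun i => Finset.Ico (m i) (m (i + 2 ^ κ)))).card :=
          (Finset.card_biUnion hdisj).symm
      _ ≤ (Finset.range (m s)).card := by
          apply Finset.card_le_card
          intro x hx
          obtain ⟨i, hi, hxi⟩ := Finset.mem_biUnion.mp hx
          simp only [Finset.mem_Ico] at hxi
          have := hcap (i + 2 ^ κ)
          simp only [Finset.mem_range]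
          omega
      _ = m s := Finset.card_range _
  calc ∑ κ ∈ Finset.range (Nat.clog 2 s),
        ∑ i ∈ (Finset.Ico 1 s).filter (fun i => padicValNat 2 i = κ), (m (i + ℓ i) - m i)
      ≤ ∑ κ ∈ Finset.range (Nat.clog 2 s), m s := Finset.sum_le_sum hbound
    _ = m s * Nat.clog 2 s := by rw [Finset.sum_const, Finset.card_range, smul_eq_mul, Nat.mul_comm]
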